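/- Let R_P be a commutative ring, R_Y an R_P-algebra, μ: R_Y ⊗_{R_P} R_Y → R_Y the multiplication map. There is a well-defined R_Y-linear map φ: Ann_{R_Y^e}(Ker μ) → Hom_{R_Y}(Hom_{R_P}(R_Y, R_P), R_Y) sending Σ a_i ⊗ b_i to the map ρ ↦ Σ ρ(a_i)·b_i; in particular for s ∈ R_Y and ρ ∈ Hom_{R_P}(R_Y,R_P), φ(z)(s·ρ) = s·φ(z)(ρ). -/
import Mathlib


open scoped TensorProduct

/-- The map `φ : Ann(ker μ) → Hom_{R_Y}(Hom_{R_P}(R_Y, R_P), R_Y)` sending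
`∑ a i ⊗ b i` to `ρ ↦ ∑ ρ (a i) • b i` is well-defined and `R_Y`-linear: for
`s ∈ R_Y` and `ρ ∈ Hom_{R_P}(R_Y, R_P)` (with `(s • ρ)(x) = ρ(s * x)`) one has
`φ(z)(s • ρ) = s * φ(z)(ρ)`. -/
theorem annihilator_kernel_phi_linear
    (R_P R_Y : Type*) [CommRing R_P] [CommRing R_Y] [Algebra R_P R_Y]
    (n : ℕ) (a b : Fin n → R_Y)
    (hz : ∀ w : R_Y ⊗[R_P] R_Y, LinearMap.mul' R_P R_Y w = 0 →
      (∑ i, a i ⊗ₜ[R_P] b i) * w = 0)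
    (s : R_Y) (ρ : R_Y →ₗ[R_P] R_P) :
    ∑ i, ρ (s * a i) • b i = s * ∑ i, ρ (a i) • b i := by
  have hw : LinearMap.mul' R_P R_Y (s ⊗ₜ[R_P] 1 - 1 ⊗ₜ[R_P] s) = 0 := by
    simp
  have h := hz _ hw
  rw [mul_sub, sub_eq_zero] at h
  have h1 : (∑ i, a i ⊗ₜ[R_P] b i) * s ⊗ₜ[R_P] 1 = ∑ i, (s * a i) ⊗ₜ[R_P] b i := by
    rw [Finset.sum_mul]
    exact Finset.sum_congr rfl fun i _ => by
      rw [Algebra.TensorProduct.tmul_mul_tmul, mul_one, mul_comm]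
  have h2 : (∑ i, a i ⊗ₜ[R_P] b i) * 1 ⊗ₜ[R_P] s = ∑ i, a i ⊗ₜ[R_P] (b i * s) := by
    rw [Finset.sum_mul]
    exact Finset.sum_congr rfl fun i _ => by
      rw [Algebra.TensorProduct.tmul_mul_tmul, mul_one]
  rw [h1, h2] at h
  let ψ : R_Y ⊗[R_P] R_Y →ₗ[R_P] R_Y :=
    TensorProduct.lift ((LinearMap.lsmul R_P R_Y).comp ρ)
  have hψ := congrArg ψ h
  simp only [ψ, map_sum, TensorProduct.lift.tmul, LinearMap.comp_apply,
    LinearMap.lsmul_apply] at hψ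
  rw [hψ, Finset.mul_sum]
  exact Finset.sum_congr rfl fun i _ => by
    rw [mul_smul_comm, mul_comm]
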